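/- Let T be a bi-valent tree with valence set {1,n} having at least one internal vertex, and let Aut_e be the kernel of the restriction homomorphism Aut(T) → Aut(T_i). For each external vertex v let m(v) = |Two(v)|, for 1 ≤ i ≤ n let V_e^{(i)} = { v ∈ V_e : m(v) = i }, and let r(i) = max{ |S| : S ⊆ V_e^{(i)} and d(v,w) ≠ 2 for all v, w ∈ S }. Then there is a (non-canonical) group isomorphism Aut_e ≅ ∏_{i=1}^{n} (S_i)^{r(i)}, where S_i denotes the symmetric group on i letters. -/

import Mathlib

open SimpleGraph

/-- The degree of a vertex of a graph, as the natural cardinality of its neighbor set. -/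
noncomputable def gdeg {V : Type*} (G : SimpleGraph V) (v : V) : ℕ :=
  (G.neighborSet v).ncard

/-- `Aut_e`: the kernel of the restriction homomorphism `Aut(T) → Aut(T_i)`, realized as the
subgroup of automorphisms of `T` fixing every internal vertex (vertex of degree `n`). -/
def autE {V : Type*} (T : SimpleGraph V) (n : ℕ) : Subgroup (Equiv.Perm V) where
  carrier := {σ | (∀ u v, T.Adj (σ u) (σ v) ↔ T.Adj u v) ∧ ∀ v, gdeg T v = n → σ v = v}
  one_mem' := by
    refine ⟨fun u v => ?_, fun v _ => rfl⟩
    simp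
  mul_mem' := by
    rintro a b ⟨ha1, ha2⟩ ⟨hb1, hb2⟩
    refine ⟨fun u v => ?_, fun v hv => ?_⟩
    · rw [Equiv.Perm.mul_apply, Equiv.Perm.mul_apply, ha1, hb1]
    · rw [Equiv.Perm.mul_apply, hb2 v hv, ha2 v hv]
  inv_mem' := by
    rintro σ ⟨h1, h2⟩
    refine ⟨fun u v => ?_, fun v hv => ?_⟩
    · conv_rhs => rw [← (show σ (σ⁻¹ u) = u by simp), ← (show σ (σ⁻¹ v) = v by simp)]
      exact (h1 _ _).symm
    · conv_lhs => rw [← h2 v hv]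
      exact (show σ⁻¹ (σ v) = v by simp)

/-- `m(v) = |Two(v)|`: the number of external vertices at distance at most `2` from `v`. -/
noncomputable def mVal {V : Type*} (T : SimpleGraph V) (v : V) : ℕ :=
  {u | gdeg T u = 1 ∧ T.dist v u ≤ 2}.ncard

/-- `r(i)`: the maximal cardinality of a set `S ⊆ V_e^{(i)}` with `d(v,w) ≠ 2` for all
`v, w ∈ S`, where `V_e^{(i)} = {v ∈ V_e | m(v) = i}`. -/
noncomputable def rVal {V : Type*} (T : SimpleGraph V) (i : ℕ) : ℕ :=
  sSup {k | ∃ s : Set V, (∀ v ∈ s, gdeg T v = 1 ∧ mVal T v = i) ∧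
    (∀ v ∈ s, ∀ w ∈ s, T.dist v w ≠ 2) ∧ s.ncard = k}

namespace Stmt5

variable {V : Type*} {n : ℕ}

open Classical in
/-- the unique neighbour of a leaf (junk value otherwise) -/
noncomputable def par (T : SimpleGraph V) (v : V) : V :=
  if h : ∃ u, T.neighborSet v = {u} then h.choose else v

/-- the set of leaves adjacent to `w` -/
def fiber (T : SimpleGraph V) (w : V) : Set V := {v | gdeg T v = 1 ∧ T.Adj w v}

noncomputable def sz (T : SimpleGraph V) (w : V) : ℕ := (fiber T w).ncard

variable {T : SimpleGraph V}

lemma nbhd_eq {v : V} (hv : gdeg T v = 1) : T.neighborSet v = {par T v} := by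
  have h : ∃ u, T.neighborSet v = {u} := Set.ncard_eq_one.mp hv
  rw [par, dif_pos h]
  exact h.choose_spec

lemma adj_par {v u : V} (hv : gdeg T v = 1) : T.Adj v u ↔ u = par T v := by
  rw [← SimpleGraph.mem_neighborSet, nbhd_eq hv, Set.mem_singleton_iff]

lemma adj_par_self {v : V} (hv : gdeg T v = 1) : T.Adj v (par T v) :=
  (adj_par hv).mpr rfl

lemma par_eq {v w : V} (hv : gdeg T v = 1) (h : T.Adj w v) : par T v = w :=
  ((adj_par hv).mp h.symm).symm

lemma mem_fiber_par {v : V} (hv : gdeg T v = 1) : v ∈ fiber T (par T v) :=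
  ⟨hv, (adj_par_self hv).symm⟩

lemma fiber_subset (w : V) : fiber T w ⊆ T.neighborSet w := fun v hv => hv.2

lemma sz_le_gdeg [Fintype V] (w : V) : sz T w ≤ gdeg T w :=
  Set.ncard_le_ncard (fiber_subset w) (Set.toFinite _)

lemma gdeg_perm [Fintype V] {σ : Equiv.Perm V}
    (hσ : ∀ u v, T.Adj (σ u) (σ v) ↔ T.Adj u v) (v : V) :
    gdeg T (σ v) = gdeg T v := by
  have himg : T.neighborSet (σ v) = σ '' T.neighborSet v := by
    ext u
    simp only [SimpleGraph.mem_neighborSet]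
    constructor
    · intro h
      exact ⟨σ⁻¹ u, (hσ v (σ⁻¹ u)).mp (by rwa [show σ (σ⁻¹ u) = u by simp]),
        by simp⟩
    · rintro ⟨x, hx, rfl⟩
      exact (hσ v x).mpr hx
  rw [gdeg, gdeg, himg, Set.ncard_image_of_injective _ σ.injective]

end Stmt5

namespace Stmt5

section Tree

variable {V : Type*} [Fintype V] {n : ℕ} {T : SimpleGraph V}

omit [Fintype V] in
lemma no_leaf_adj (hn : 1 < n) (hT : T.IsTree) (hint : ∃ v, gdeg T v = n)
    {u v : V} (hu : gdeg T u = 1) (hv : gdeg T v = 1) : ¬ T.Adj u v := by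
  intro hadj
  have hNu : T.neighborSet u = {v} := by
    rw [nbhd_eq hu]
    have : v = par T u := (adj_par hu).mp hadj
    rw [this]
  have hNv : T.neighborSet v = {u} := by
    rw [nbhd_eq hv]
    have : u = par T v := (adj_par hv).mp hadj.symm
    rw [this]
  have key : ∀ (a w : V), T.Walk a w → a = u ∨ a = v → w = u ∨ w = v := by
    intro a w p
    induction p with
    | nil => exact id
    | @cons x y _ h q ih =>
      intro hab
      apply ih
      rcases hab with rfl | rfl
      · right
        have : y ∈ T.neighborSet x := h
        rw [hNu] at this
        exact this
      · left
        have : y ∈ T.neighborSet x := h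
        rw [hNv] at this
        exact this
  obtain ⟨z, hz⟩ := hint
  obtain ⟨p⟩ := hT.isConnected.preconnected u z
  rcases key u z p (Or.inl rfl) with rfl | rfl
  · rw [hu] at hz; omega
  · rw [hv] at hz; omega

variable (hn : 1 < n) (hT : T.IsTree) (hbi : ∀ v, gdeg T v = 1 ∨ gdeg T v = n)
  (hint : ∃ v, gdeg T v = n)

include hn hT hbi hint

omit [Fintype V] in
lemma par_internal {v : V} (hv : gdeg T v = 1) : gdeg T (par T v) = n := by
  rcases hbi (par T v) with h1 | h1
  · exact absurd (adj_par_self hv) (no_leaf_adj hn hT hint hv h1)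
  · exact h1

omit [Fintype V] in
lemma sz_pos_internal {w : V} (hw : 0 < sz T w) : gdeg T w = n := by
  obtain ⟨v, hv⟩ := Set.nonempty_of_ncard_ne_zero hw.ne'
  rw [← par_eq hv.1 hv.2]
  exact par_internal hn hT hbi hint hv.1

omit hT hint in
lemma sz_le (w : V) : sz T w ≤ n := by
  rcases hbi w with h1 | h1
  · calc sz T w ≤ gdeg T w := sz_le_gdeg w
    _ = 1 := h1
    _ ≤ n := hn.le
  · calc sz T w ≤ gdeg T w := sz_le_gdeg w
    _ = n := h1

omit hn hT hbi hint

omit [Fintype V] in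
lemma common_of_dist_two {v u : V} (hv : gdeg T v = 1) (h2 : T.dist v u = 2) :
    T.Adj (par T v) u := by
  obtain ⟨p, hp⟩ := SimpleGraph.exists_walk_of_dist_ne_zero (by rw [h2]; omega)
  rw [h2] at hp
  cases p with
  | nil => simp at hp
  | @cons _ x _ h q =>
    cases q with
    | nil => simp at hp
    | cons h' q' =>
      cases q' with
      | nil =>
        have hx : x = par T v := (adj_par hv).mp h
        rwa [hx] at h'
      | cons h'' q'' => simp [SimpleGraph.Walk.length_cons] at hp

include hn hT hint

omit [Fintype V] in
lemma mVal_eq {v : V} (hv : gdeg T v = 1) : mVal T v = sz T (par T v) := by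
  have hset : {u | gdeg T u = 1 ∧ T.dist v u ≤ 2} = fiber T (par T v) := by
    ext u
    constructor
    · rintro ⟨hu, hd⟩
      refine ⟨hu, ?_⟩
      have h0 : T.dist v u = 0 ∨ T.dist v u = 1 ∨ T.dist v u = 2 := by omega
      rcases h0 with h0 | h0 | h0
      · have : v = u := (hT.isConnected.dist_eq_zero_iff).mp h0
        rw [← this]
        exact (adj_par_self hv).symm
      · exact absurd (SimpleGraph.dist_eq_one_iff_adj.mp h0)
          (no_leaf_adj hn hT hint hv hu)
      · exact common_of_dist_two hv h0
    · rintro ⟨hu, hadj⟩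
      refine ⟨hu, ?_⟩
      calc T.dist v u ≤ (SimpleGraph.Walk.cons (adj_par_self hv)
          (SimpleGraph.Walk.cons hadj SimpleGraph.Walk.nil)).length :=
            SimpleGraph.dist_le _
      _ = 2 := by simp
  rw [mVal, sz, hset]

omit [Fintype V] in
lemma dist_two_of_sib {u v : V} (hu : gdeg T u = 1) (hv : gdeg T v = 1)
    (hne : u ≠ v) (hpar : par T u = par T v) : T.dist u v = 2 := by
  have hadj2 : T.Adj (par T u) v := hpar ▸ (adj_par_self hv).symm
  have hle : T.dist u v ≤ 2 := by
    calc T.dist u v ≤ (SimpleGraph.Walk.cons (adj_par_self hu)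
        (SimpleGraph.Walk.cons hadj2 SimpleGraph.Walk.nil)).length :=
          SimpleGraph.dist_le _
    _ = 2 := by simp
  have h0 : T.dist u v ≠ 0 := fun h => hne (hT.isConnected.dist_eq_zero_iff.mp h)
  have h1 : T.dist u v ≠ 1 := fun h =>
    no_leaf_adj hn hT hint hu hv (SimpleGraph.dist_eq_one_iff_adj.mp h)
  omega

end Tree

end Stmt5

namespace Stmt5

section RVal

variable {V : Type*} [Fintype V] {n : ℕ} {T : SimpleGraph V}
  (hn : 1 < n) (hT : T.IsTree) (hbi : ∀ v, gdeg T v = 1 ∨ gdeg T v = n)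
  (hint : ∃ v, gdeg T v = n)

include hn hT hint

lemma rval_eq (i : ℕ) : rVal T (i + 1) = {w : V | sz T w = i + 1}.ncard := by
  classical
  set Wm : Set V := {w : V | sz T w = i + 1} with hWm
  set K : Set ℕ := {k | ∃ s : Set V, (∀ v ∈ s, gdeg T v = 1 ∧ mVal T v = i + 1) ∧
    (∀ v ∈ s, ∀ w ∈ s, T.dist v w ≠ 2) ∧ s.ncard = k} with hK
  -- upper bound
  have hub : ∀ k ∈ K, k ≤ Wm.ncard := by
    rintro k ⟨s, hs1, hs2, rfl⟩
    refine Set.ncard_le_ncard_of_injOn (par T) ?_ ?_ (Set.toFinite _)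
    · intro v hv
      have := (hs1 v hv)
      rw [hWm, Set.mem_setOf_eq, ← mVal_eq hn hT hint this.1]
      exact this.2
    · intro a ha b hb hab
      by_contra hne
      exact hs2 a ha b hb (dist_two_of_sib hn hT hint (hs1 a ha).1 (hs1 b hb).1 hne hab)
  -- achieving set
  have hfib : ∀ w : ↥Wm, (fiber T (w : V)).Nonempty := by
    rintro ⟨w, hw⟩
    apply Set.nonempty_of_ncard_ne_zero
    show sz T w ≠ 0
    rw [hw]
    omega
  choose ℓ hℓ using hfib
  have hparℓ : ∀ w : ↥Wm, par T (ℓ w) = (w : V) := fun w =>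
    par_eq (hℓ w).1 (hℓ w).2
  have hinjℓ : Function.Injective ℓ := by
    intro w w' h
    have : (w : V) = (w' : V) := by rw [← hparℓ w, ← hparℓ w', h]
    exact Subtype.ext this
  have hmem : Wm.ncard ∈ K := by
    refine ⟨Set.range ℓ, ?_, ?_, ?_⟩
    · rintro v ⟨w, rfl⟩
      refine ⟨(hℓ w).1, ?_⟩
      rw [mVal_eq hn hT hint (hℓ w).1, hparℓ w]
      exact w.2
    · rintro v ⟨w, rfl⟩ u ⟨w', rfl⟩ hd
      have hcom : T.Adj (par T (ℓ w)) (ℓ w') := common_of_dist_two (hℓ w).1 hd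
      rw [hparℓ w] at hcom
      have : par T (ℓ w') = (w : V) := par_eq (hℓ w').1 hcom
      rw [hparℓ w'] at this
      have hww : w = w' := Subtype.ext this.symm
      subst hww
      rw [SimpleGraph.dist_self] at hd
      omega
    · rw [← Set.image_univ, Set.ncard_image_of_injOn (hinjℓ.injOn),
        Set.ncard_univ, Nat.card_coe_set_eq]
  refine le_antisymm (csSup_le ⟨_, hmem⟩ hub) (le_csSup ⟨Wm.ncard, hub⟩ hmem)

end RVal

end Stmt5

namespace Stmt5

section Main

variable {V : Type*} [Fintype V] {n : ℕ} (T : SimpleGraph V)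

noncomputable def eF (w : V) : ↥(fiber T w) ≃ Fin (sz T w) :=
  Finite.equivFinOfCardEq (Nat.card_coe_set_eq _)

noncomputable def locConj (i : Fin n) (w : {w : V // sz T w = (i : ℕ) + 1}) :
    ↥(fiber T (w : V)) ≃ Fin ((i : ℕ) + 1) :=
  (eF T (w : V)).trans (finCongr w.2)

variable (q : ∀ i : Fin n, {w : V // sz T w = (i : ℕ) + 1} ≃ Fin (rVal T ((i : ℕ) + 1)))

noncomputable def locPerm (f : ∀ i : Fin n, Fin (rVal T ((i : ℕ) + 1)) → Equiv.Perm (Fin ((i : ℕ) + 1)))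
    (w : V) (hlt : sz T w - 1 < n) (h0 : 0 < sz T w) : Equiv.Perm ↥(fiber T w) :=
  (locConj T ⟨sz T w - 1, hlt⟩ ⟨w, by simp; omega⟩).symm.permCongr
    (f ⟨sz T w - 1, hlt⟩ (q ⟨sz T w - 1, hlt⟩ ⟨w, by simp; omega⟩))

lemma permCongr_mul {α β : Type*} (e : α ≃ β) (p q : Equiv.Perm α) :
    e.permCongr (p * q) = e.permCongr p * e.permCongr q := by
  ext x
  simp [Equiv.permCongr_apply, Equiv.Perm.mul_apply]

lemma permCongr_one {α β : Type*} (e : α ≃ β) : e.permCongr (1 : Equiv.Perm α) = 1 := by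
  ext x
  simp [Equiv.permCongr_apply]

lemma permCongr_inv {α β : Type*} (e : α ≃ β) (p : Equiv.Perm α) :
    e.permCongr p⁻¹ = (e.permCongr p)⁻¹ := by
  have h := permCongr_mul e p p⁻¹
  rw [mul_inv_cancel, permCongr_one] at h
  exact (eq_inv_of_mul_eq_one_right h.symm)

lemma locPerm_eval (f : ∀ i : Fin n, Fin (rVal T ((i : ℕ) + 1)) → Equiv.Perm (Fin ((i : ℕ) + 1)))
    (i : Fin n) (w : V) (hw : sz T w = (i : ℕ) + 1) (hlt : sz T w - 1 < n) (h0 : 0 < sz T w) :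
    locPerm T q f w hlt h0 =
      (locConj T i ⟨w, hw⟩).symm.permCongr (f i (q i ⟨w, hw⟩)) := by
  have h : i = ⟨sz T w - 1, hlt⟩ := Fin.ext (by simp; omega)
  subst h
  rfl

lemma locPerm_inv (f : ∀ i : Fin n, Fin (rVal T ((i : ℕ) + 1)) → Equiv.Perm (Fin ((i : ℕ) + 1)))
    (w : V) (hlt : sz T w - 1 < n) (h0 : 0 < sz T w) :
    locPerm T q f⁻¹ w hlt h0 = (locPerm T q f w hlt h0)⁻¹ := by
  rw [locPerm, locPerm, ← permCongr_inv]
  rfl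

noncomputable def gfun (hlt : ∀ w : V, sz T w - 1 < n)
    (f : ∀ i : Fin n, Fin (rVal T ((i : ℕ) + 1)) → Equiv.Perm (Fin ((i : ℕ) + 1))) : V → V :=
  fun v => if h : gdeg T v = 1 then
    ((locPerm T q f (par T v) (hlt _) ((Set.ncard_pos (Set.toFinite _)).mpr ⟨v, mem_fiber_par h⟩))
      ⟨v, mem_fiber_par h⟩ : V)
  else v

lemma locPerm_coe_congr (f : ∀ i : Fin n, Fin (rVal T ((i : ℕ) + 1)) → Equiv.Perm (Fin ((i : ℕ) + 1)))
    {w w' : V} (hww : w = w') (hlt : sz T w - 1 < n) (hlt' : sz T w' - 1 < n)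
    (h0 : 0 < sz T w) (h0' : 0 < sz T w') {x : V} (hx : x ∈ fiber T w) (hx' : x ∈ fiber T w') :
    ((locPerm T q f w hlt h0 ⟨x, hx⟩ : ↥(fiber T w)) : V) =
    ((locPerm T q f w' hlt' h0' ⟨x, hx'⟩ : ↥(fiber T w')) : V) := by
  subst hww
  rfl

lemma gfun_pos (hlt : ∀ w : V, sz T w - 1 < n) (f) {v : V} (h : gdeg T v = 1) :
    gfun T q hlt f v = ((locPerm T q f (par T v) (hlt _)
      ((Set.ncard_pos (Set.toFinite _)).mpr ⟨v, mem_fiber_par h⟩)) ⟨v, mem_fiber_par h⟩ : V) :=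
  dif_pos h

lemma gfun_mem (hlt : ∀ w : V, sz T w - 1 < n) (f) {v : V} (h : gdeg T v = 1) :
    gfun T q hlt f v ∈ fiber T (par T v) := by
  rw [gfun_pos T q hlt f h]
  exact Subtype.coe_prop _

lemma gfun_of_internal (hlt : ∀ w : V, sz T w - 1 < n) (f) {v : V} (h : ¬ gdeg T v = 1) :
    gfun T q hlt f v = v := dif_neg h

lemma gfun_inv (hlt : ∀ w : V, sz T w - 1 < n) (f) (v : V) :
    gfun T q hlt f⁻¹ (gfun T q hlt f v) = v := by
  by_cases h : gdeg T v = 1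
  · have hm := gfun_mem T q hlt f h
    have hpar : par T (gfun T q hlt f v) = par T v := par_eq hm.1 hm.2
    have hpos : 0 < sz T (par T v) := (Set.ncard_pos (Set.toFinite _)).mpr ⟨v, mem_fiber_par h⟩
    rw [gfun_pos T q hlt f⁻¹ hm.1]
    rw [locPerm_coe_congr T q f⁻¹ hpar (hlt _) (hlt _)
      ((Set.ncard_pos (Set.toFinite _)).mpr ⟨_, mem_fiber_par hm.1⟩) hpos (mem_fiber_par hm.1) (hpar ▸ mem_fiber_par hm.1)]
    rw [locPerm_inv]
    have hval : (⟨gfun T q hlt f v, hpar ▸ mem_fiber_par hm.1⟩ : ↥(fiber T (par T v))) =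
        locPerm T q f (par T v) (hlt _) hpos ⟨v, mem_fiber_par h⟩ := by
      apply Subtype.ext
      exact gfun_pos T q hlt f h
    rw [hval, show ∀ (e : Equiv.Perm ↥(fiber T (par T v))) x, e⁻¹ (e x) = x from fun e x => by simp]
  · rw [gfun_of_internal T q hlt f h, gfun_of_internal T q hlt f⁻¹ h]

noncomputable def sigma0 (hlt : ∀ w : V, sz T w - 1 < n)
    (f : ∀ i : Fin n, Fin (rVal T ((i : ℕ) + 1)) → Equiv.Perm (Fin ((i : ℕ) + 1))) :
    Equiv.Perm V where
  toFun := gfun T q hlt f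
  invFun := gfun T q hlt f⁻¹
  left_inv := gfun_inv T q hlt f
  right_inv := fun v => by
    have := gfun_inv T q hlt f⁻¹ v
    rwa [inv_inv] at this

end Main

end Stmt5

namespace Stmt5

section Final

variable {V : Type*} [Fintype V] {n : ℕ} {T : SimpleGraph V}
  (hn : 1 < n) (hT : T.IsTree) (hbi : ∀ v, gdeg T v = 1 ∨ gdeg T v = n)
  (hint : ∃ v, gdeg T v = n)
  (q : ∀ i : Fin n, {w : V // sz T w = (i : ℕ) + 1} ≃ Fin (rVal T ((i : ℕ) + 1)))

lemma perm_eq_of_conj_one {α : Type*} {m : ℕ} {σ : Equiv.Perm α} {p : α → Prop}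
    (h : ∀ x, p (σ x) ↔ p x) (c : {x // p x} ≃ Fin m)
    (hone : c.permCongr (σ.subtypePerm h) = 1) {v : α} (hv : p v) : σ v = v := by
  have h2 : σ.subtypePerm h = 1 := c.permCongr.injective (hone.trans (permCongr_one c).symm)
  exact congrArg Subtype.val (Equiv.ext_iff.mp h2 ⟨v, hv⟩)

include hn hT hbi hint in
lemma mem_fiber_iff {σ : Equiv.Perm V} (hσ : σ ∈ autE T n) {w : V} (h0 : 0 < sz T w)
    (x : V) : x ∈ fiber T w ↔ σ x ∈ fiber T w := by
  obtain ⟨h1, h2⟩ := hσ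
  have hg : ∀ y, gdeg T (σ y) = gdeg T y := gdeg_perm h1
  have hw : σ w = w := h2 w (sz_pos_internal hn hT hbi hint h0)
  constructor
  · rintro ⟨hl, ha⟩
    refine ⟨by rw [hg]; exact hl, ?_⟩
    have := (h1 w x).mpr ha
    rwa [hw] at this
  · rintro ⟨hl, ha⟩
    refine ⟨by rw [← hg x]; exact hl, ?_⟩
    rw [← hw] at ha
    exact (h1 w x).mp ha

include hn hT hbi hint in
lemma sigma0_mem (hlt : ∀ w : V, sz T w - 1 < n)
    (f : ∀ i : Fin n, Fin (rVal T ((i : ℕ) + 1)) → Equiv.Perm (Fin ((i : ℕ) + 1))) :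
    sigma0 T q hlt f ∈ autE T n := by
  have hnl : ∀ v : V, gdeg T v = n → ¬ gdeg T v = 1 := by
    intro v hv h1
    rw [hv] at h1
    omega
  have hfix : ∀ v, gdeg T v = n → sigma0 T q hlt f v = v := fun v hv =>
    gfun_of_internal T q hlt f (hnl v hv)
  refine ⟨?_, hfix⟩
  intro u v
  show T.Adj (gfun T q hlt f u) (gfun T q hlt f v) ↔ T.Adj u v
  rcases hbi u with hu | hu <;> rcases hbi v with hv | hv
  · -- both leaves
    have hmu := gfun_mem T q hlt f hu
    have hmv := gfun_mem T q hlt f hv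
    exact iff_of_false (no_leaf_adj hn hT hint hmu.1 hmv.1) (no_leaf_adj hn hT hint hu hv)
  · -- u leaf, v internal
    have hmu := gfun_mem T q hlt f hu
    rw [gfun_of_internal T q hlt f (hnl v hv)]
    rw [adj_par hmu.1, par_eq hmu.1 hmu.2, adj_par hu]
  · -- u internal, v leaf
    have hmv := gfun_mem T q hlt f hv
    rw [gfun_of_internal T q hlt f (hnl u hu)]
    rw [T.adj_comm _ (gfun T q hlt f v), T.adj_comm u v]
    rw [adj_par hmv.1, par_eq hmv.1 hmv.2, adj_par hv]
  · rw [gfun_of_internal T q hlt f (hnl u hu), gfun_of_internal T q hlt f (hnl v hv)]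

end Final

end Stmt5

open Stmt5 in
/-- For a bi-valent tree `T` with valence set `{1, n}` having at least one
internal vertex, there is a (non-canonical) group isomorphism
`Aut_e ≅ ∏_{i = 1}^{n} (S_i)^{r(i)}`. -/
theorem stmt_5 {V : Type*} [Fintype V] {n : ℕ} (hn : 1 < n)
    (T : SimpleGraph V) (hT : T.IsTree)
    (hbi : ∀ v, gdeg T v = 1 ∨ gdeg T v = n)
    (hint : ∃ v, gdeg T v = n) :
    Nonempty (autE T n ≃*
      ∀ i : Fin n, Fin (rVal T ((i : ℕ) + 1)) → Equiv.Perm (Fin ((i : ℕ) + 1))) := by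
  classical
  have hlt : ∀ w : V, sz T w - 1 < n := by
    intro w
    have := sz_le hn hbi w
    omega
  have hq : ∀ i : Fin n, Nat.card {w : V // sz T w = (i : ℕ) + 1} = rVal T ((i : ℕ) + 1) := by
    intro i
    rw [rval_eq hn hT hint (i : ℕ)]
    exact Nat.card_coe_set_eq _
  let q : ∀ i : Fin n, {w : V // sz T w = (i : ℕ) + 1} ≃ Fin (rVal T ((i : ℕ) + 1)) :=
    fun i => Finite.equivFinOfCardEq (hq i)
  have hpos0 : ∀ (i : Fin n) (k : Fin (rVal T ((i : ℕ) + 1))),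
      0 < sz T (((q i).symm k : {w : V // sz T w = (i : ℕ) + 1}) : V) := by
    intro i k
    have := ((q i).symm k).2
    omega
  let φ : autE T n → (∀ i : Fin n, Fin (rVal T ((i : ℕ) + 1)) → Equiv.Perm (Fin ((i : ℕ) + 1))) :=
    fun σ i k => (locConj T i ((q i).symm k)).permCongr
      (Equiv.Perm.subtypePerm (σ : Equiv.Perm V)
        (fun x => (mem_fiber_iff hn hT hbi hint σ.2 (hpos0 i k) x).symm))
  have hmul : ∀ σ τ, φ (σ * τ) = φ σ * φ τ := by
    intro σ τ
    funext i k
    simp only [φ]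
    ext x
    simp [Equiv.permCongr_apply, Equiv.Perm.subtypePerm_apply, Equiv.Perm.mul_apply,
      Pi.mul_apply]
  let Φ : autE T n →* (∀ i : Fin n, Fin (rVal T ((i : ℕ) + 1)) → Equiv.Perm (Fin ((i : ℕ) + 1))) :=
    MonoidHom.mk' φ hmul
  have hinj : Function.Injective Φ := by
    rw [injective_iff_map_eq_one]
    intro σ hσ1
    have hσ : φ σ = 1 := hσ1
    apply Subtype.ext
    apply Equiv.ext
    intro v
    show (σ : Equiv.Perm V) v = v
    rcases hbi v with hv | hv
    · -- leaf
      have hpos : 0 < sz T (par T v) :=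
        (Set.ncard_pos (Set.toFinite _)).mpr ⟨v, mem_fiber_par hv⟩
      set i0 : Fin n := ⟨sz T (par T v) - 1, hlt _⟩ with hi0
      have hw : sz T (par T v) = (i0 : ℕ) + 1 := by
        show _ = sz T (par T v) - 1 + 1
        omega
      have h1 : (locConj T i0 ((q i0).symm (q i0 ⟨par T v, hw⟩))).permCongr
          ((σ : Equiv.Perm V).subtypePerm
            (fun x => (mem_fiber_iff hn hT hbi hint σ.2 (hpos0 i0 (q i0 ⟨par T v, hw⟩)) x).symm)) = 1 :=
        congrFun (congrFun hσ i0) (q i0 ⟨par T v, hw⟩)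
      have hy : (((q i0).symm (q i0 ⟨par T v, hw⟩) : {w : V // sz T w = (i0 : ℕ) + 1}) : V) =
          par T v := by rw [Equiv.symm_apply_apply]
      have hv' : v ∈ fiber T (((q i0).symm (q i0 ⟨par T v, hw⟩) :
          {w : V // sz T w = (i0 : ℕ) + 1}) : V) := by
        rw [hy]; exact mem_fiber_par hv
      exact perm_eq_of_conj_one _ _ h1 hv'
    · -- internal
      exact σ.2.2 v hv
  have hsurj : Function.Surjective Φ := by
    intro f
    refine ⟨⟨sigma0 T q hlt f, sigma0_mem hn hT hbi hint q hlt f⟩, ?_⟩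
    show φ _ = f
    funext i k
    simp only [φ]
    have hs : Equiv.Perm.subtypePerm (sigma0 T q hlt f)
        (fun x => (mem_fiber_iff hn hT hbi hint (sigma0_mem hn hT hbi hint q hlt f) (hpos0 i k) x).symm) =
        locPerm T q f (((q i).symm k : {w : V // sz T w = (i : ℕ) + 1}) : V)
          (hlt _) (hpos0 i k) := by
      apply Equiv.ext
      rintro ⟨x, hx⟩
      apply Subtype.ext
      show sigma0 T q hlt f x = _
      have hxp : par T x = _ := par_eq hx.1 hx.2
      show gfun T q hlt f x = _
      rw [gfun_pos T q hlt f hx.1]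
      exact locPerm_coe_congr T q f hxp (hlt _) (hlt _) _ (hpos0 i k)
        (mem_fiber_par hx.1) hx
    rw [hs, locPerm_eval T q f i _ ((q i).symm k).2]
    have hk : q i ⟨(((q i).symm k : {w : V // sz T w = (i : ℕ) + 1}) : V),
        ((q i).symm k).2⟩ = k := by
      show q i ((q i).symm k) = k
      exact (q i).apply_symm_apply k
    rw [hk]
    ext x
    simp [Equiv.permCongr_apply]
  exact ⟨MulEquiv.ofBijective Φ ⟨hinj, hsurj⟩⟩
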